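/- arXiv:1507.01994 — 4 statements merged into one kernel-verified Lean document; each statement's English description precedes it below -/
import Mathlib

section
/- For every nonnegative integer K and every integer 0 ≤ k ≤ K, the k-order network distance d_N^k is a pseudometric on the space of K-order networks modulo k-isomorphism: for all K-order networks N_X, N_Y, N_Z it satisfies (i) d_N^k(N_X,N_Y) ≥ 0, (ii) d_N^k(N_X,N_Y) = d_N^k(N_Y,N_X), (iii) if N_X and N_Y are k-isomorphic then d_N^k(N_X,N_Y) = 0, and (iv) d_N^k(N_X,N_Y) ≤ d_N^k(N_X,N_Z) + d_N^k(N_Z,N_Y). -/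
open scoped ENNReal

/-- A correspondence between node sets `X` and `Y`: a set of pairs in which every
`x : X` and every `y : Y` appears. -/
def IsCorrespondence {X Y : Type} (C : Set (X × Y)) : Prop :=
  (∀ x : X, ∃ y : Y, (x, y) ∈ C) ∧ (∀ y : Y, ∃ x : X, (x, y) ∈ C)

/-- The rank of a tuple: the number of distinct elements appearing in it. -/
noncomputable def tupleRank {X : Type} {n : ℕ} (t : Fin n → X) : ℕ :=
  Set.ncard (Set.range t)

/-- A `K`-order network on a finite nonempty node set `X`: relationship functions
`r k : X^{k+1} → [0,1]` for `0 ≤ k ≤ K`, symmetric under permutations of the arguments,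
and such that any subtuple with the same set of distinct elements as the full tuple
carries the same relationship value. -/
structure HONetwork (K : ℕ) (X : Type) [Fintype X] [Nonempty X] : Type where
  r : ∀ k : ℕ, (Fin (k + 1) → X) → ℝ
  r_nonneg : ∀ k, k ≤ K → ∀ t : Fin (k + 1) → X, 0 ≤ r k t
  r_le_one : ∀ k, k ≤ K → ∀ t : Fin (k + 1) → X, r k t ≤ 1
  symm : ∀ k, k ≤ K → ∀ (t : Fin (k + 1) → X) (σ : Equiv.Perm (Fin (k + 1))),
    r k (t ∘ σ) = r k t
  identity : ∀ k, k ≤ K → ∀ k', k' ≤ K → ∀ (t : Fin (k + 1) → X)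
    (ι : Fin (k' + 1) → Fin (k + 1)), StrictMono ι →
    Set.range (t ∘ ι) = Set.range t → r k' (t ∘ ι) = r k t

/-- The `k`-order network difference `Γ^k_{X,Y}(C)`: the largest value of
`|r_X^k(x_{0:k}) − r_Y^k(y_{0:k})|` over tuples of pairs of correspondents in `C`. -/
noncomputable def Gamma {K : ℕ} {X Y : Type} [Fintype X] [Nonempty X] [Fintype Y] [Nonempty Y]
    (NX : HONetwork K X) (NY : HONetwork K Y) (k : ℕ) (C : Set (X × Y)) : ℝ :=
  sSup { v : ℝ | ∃ (tx : Fin (k + 1) → X) (ty : Fin (k + 1) → Y),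
    (∀ i, (tx i, ty i) ∈ C) ∧ v = |NX.r k tx - NY.r k ty| }

/-- The `k`-order network distance: minimum of `Γ^k_{X,Y}(C)` over correspondences `C`. -/
noncomputable def dN {K : ℕ} {X Y : Type} [Fintype X] [Nonempty X] [Fintype Y] [Nonempty Y]
    (k : ℕ) (NX : HONetwork K X) (NY : HONetwork K Y) : ℝ :=
  sInf { v : ℝ | ∃ C : Set (X × Y), IsCorrespondence C ∧ v = Gamma NX NY k C }

/-- The `p`-norm of a vector in `ℝ^{K+1}`, `1 ≤ p ≤ ∞`. -/
noncomputable def pNorm (K : ℕ) (p : ℝ≥0∞) [Fact (1 ≤ p)] (v : Fin (K + 1) → ℝ) : ℝ :=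
  ‖(WithLp.equiv p (Fin (K + 1) → ℝ)).symm v‖

/-- The `p`-norm network distance: minimum over correspondences `C` of the `p`-norm of the
vector `(Γ^0_{X,Y}(C), …, Γ^K_{X,Y}(C))`. -/
noncomputable def dNp {K : ℕ} {X Y : Type} [Fintype X] [Nonempty X] [Fintype Y] [Nonempty Y]
    (p : ℝ≥0∞) [Fact (1 ≤ p)] (NX : HONetwork K X) (NY : HONetwork K Y) : ℝ :=
  sInf { v : ℝ | ∃ C : Set (X × Y), IsCorrespondence C ∧
    v = pNorm K p (fun k : Fin (K + 1) => Gamma NX NY (k : ℕ) C) }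

/-- Two `K`-order networks are `k`-isomorphic if a bijection of the node sets preserves the
`k`-order relationship functions. -/
def kIsomorphic {K : ℕ} {X Y : Type} [Fintype X] [Nonempty X] [Fintype Y] [Nonempty Y]
    (k : ℕ) (NX : HONetwork K X) (NY : HONetwork K Y) : Prop :=
  ∃ φ : X ≃ Y, ∀ t : Fin (k + 1) → X, NY.r k (fun i => φ (t i)) = NX.r k t

/-- Two `K`-order networks are isomorphic if a bijection of the node sets preserves the
`k`-order relationship functions for all `0 ≤ k ≤ K`. -/
def Isomorphic {K : ℕ} {X Y : Type} [Fintype X] [Nonempty X] [Fintype Y] [Nonempty Y]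
    (NX : HONetwork K X) (NY : HONetwork K Y) : Prop :=
  ∃ φ : X ≃ Y, ∀ k, k ≤ K → ∀ t : Fin (k + 1) → X, NY.r k (fun i => φ (t i)) = NX.r k t

/-- A `K`-order dissimilarity network: a `K`-order network whose relationship functions
decompose as `r^k = d^k + ε · rank`, with nonnegative dissimilarity functions `d^k`
satisfying the order increasing property, and `0 < ε ≤ 1 − (1/K) · max d^K`. -/
structure DissimNetwork (K : ℕ) (X : Type) [Fintype X] [Nonempty X]
    extends HONetwork K X where
  dfun : ∀ k : ℕ, (Fin (k + 1) → X) → ℝ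
  eps : ℝ
  dfun_nonneg : ∀ k, k ≤ K → ∀ t : Fin (k + 1) → X, 0 ≤ dfun k t
  decomp : ∀ k, k ≤ K → ∀ t : Fin (k + 1) → X,
    r k t = dfun k t + eps * (tupleRank t : ℝ)
  order_incr : ∀ k : ℕ, k + 1 ≤ K → ∀ t : Fin (k + 2) → X,
    dfun k (fun i : Fin (k + 1) => t i.castSucc) ≤ dfun (k + 1) t
  eps_pos : 0 < eps
  eps_le : ∀ t : Fin (K + 1) → X, eps ≤ 1 - (1 / (K : ℝ)) * dfun K t

/-- A `K`-order proximity network: a `K`-order network whose relationship functions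
decompose as `r^k = p^k − ε · rank`, with nonnegative proximity functions `p^k`
satisfying the order decreasing property, and `0 < ε ≤ (1/K) · min p^K`. -/
structure ProxNetwork (K : ℕ) (X : Type) [Fintype X] [Nonempty X]
    extends HONetwork K X where
  pfun : ∀ k : ℕ, (Fin (k + 1) → X) → ℝ
  eps : ℝ
  pfun_nonneg : ∀ k, k ≤ K → ∀ t : Fin (k + 1) → X, 0 ≤ pfun k t
  decomp : ∀ k, k ≤ K → ∀ t : Fin (k + 1) → X,
    r k t = pfun k t - eps * (tupleRank t : ℝ)
  order_decr : ∀ k : ℕ, k + 1 ≤ K → ∀ t : Fin (k + 2) → X,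
    pfun (k + 1) t ≤ pfun k (fun i : Fin (k + 1) => t i.castSucc)
  eps_pos : 0 < eps
  eps_le : ∀ t : Fin (K + 1) → X, eps ≤ (1 / (K : ℝ)) * pfun K t

section Aux

variable {K k : ℕ} {X Y Z : Type} [Fintype X] [Nonempty X] [Fintype Y] [Nonempty Y]
  [Fintype Z] [Nonempty Z]

lemma gammaSet_bdd (hk : k ≤ K) (NX : HONetwork K X) (NY : HONetwork K Y) (C : Set (X × Y)) :
    BddAbove { v : ℝ | ∃ (tx : Fin (k + 1) → X) (ty : Fin (k + 1) → Y),
      (∀ i, (tx i, ty i) ∈ C) ∧ v = |NX.r k tx - NY.r k ty| } := by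
  refine ⟨1, ?_⟩
  rintro v ⟨tx, ty, _, rfl⟩
  have h1 := NX.r_nonneg k hk tx
  have h2 := NX.r_le_one k hk tx
  have h3 := NY.r_nonneg k hk ty
  have h4 := NY.r_le_one k hk ty
  rw [abs_sub_le_iff]
  constructor <;> linarith

lemma mem_gammaSet_le (hk : k ≤ K) (NX : HONetwork K X) (NY : HONetwork K Y) (C : Set (X × Y))
    (tx : Fin (k + 1) → X) (ty : Fin (k + 1) → Y) (h : ∀ i, (tx i, ty i) ∈ C) :
    |NX.r k tx - NY.r k ty| ≤ Gamma NX NY k C :=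
  le_csSup (gammaSet_bdd hk NX NY C) ⟨tx, ty, h, rfl⟩

lemma gamma_nonneg (NX : HONetwork K X) (NY : HONetwork K Y) (C : Set (X × Y)) :
    0 ≤ Gamma NX NY k C := by
  apply Real.sSup_nonneg
  rintro v ⟨tx, ty, _, rfl⟩
  exact abs_nonneg _

lemma dNSet_nonempty (NX : HONetwork K X) (NY : HONetwork K Y) :
    { v : ℝ | ∃ C : Set (X × Y), IsCorrespondence C ∧ v = Gamma NX NY k C }.Nonempty := by
  refine ⟨Gamma NX NY k Set.univ, Set.univ, ⟨?_, ?_⟩, rfl⟩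
  · exact fun x => ⟨Classical.arbitrary Y, trivial⟩
  · exact fun y => ⟨Classical.arbitrary X, trivial⟩

lemma dNSet_bddBelow (NX : HONetwork K X) (NY : HONetwork K Y) :
    BddBelow { v : ℝ | ∃ C : Set (X × Y), IsCorrespondence C ∧ v = Gamma NX NY k C } := by
  refine ⟨0, ?_⟩
  rintro v ⟨C, _, rfl⟩
  exact gamma_nonneg NX NY C

lemma dN_nonneg (NX : HONetwork K X) (NY : HONetwork K Y) : 0 ≤ dN k NX NY := by
  apply Real.sInf_nonneg
  rintro v ⟨C, _, rfl⟩
  exact gamma_nonneg NX NY C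

/-- The swap of a correspondence. -/
def swapC (C : Set (X × Y)) : Set (Y × X) := { p | (p.2, p.1) ∈ C }

lemma swapC_corr {C : Set (X × Y)} (hC : IsCorrespondence C) : IsCorrespondence (swapC C) :=
  ⟨fun y => (hC.2 y).imp fun _ h => h, fun x => (hC.1 x).imp fun _ h => h⟩

lemma gamma_swap (NX : HONetwork K X) (NY : HONetwork K Y) (C : Set (X × Y)) :
    Gamma NY NX k (swapC C) = Gamma NX NY k C := by
  unfold Gamma
  congr 1
  ext v
  constructor
  · rintro ⟨ty, tx, h, rfl⟩
    exact ⟨tx, ty, h, (abs_sub_comm _ _).symm⟩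
  · rintro ⟨tx, ty, h, rfl⟩
    exact ⟨ty, tx, h, (abs_sub_comm _ _).symm⟩

lemma dN_symm (NX : HONetwork K X) (NY : HONetwork K Y) : dN k NX NY = dN k NY NX := by
  unfold dN
  congr 1
  ext v
  constructor
  · rintro ⟨C, hC, rfl⟩
    exact ⟨swapC C, swapC_corr hC, (gamma_swap NX NY C).symm⟩
  · rintro ⟨C, hC, rfl⟩
    exact ⟨swapC C, swapC_corr hC, (gamma_swap NY NX C).symm⟩

lemma dN_eq_zero_of_iso (hk : k ≤ K) (NX : HONetwork K X) (NY : HONetwork K Y)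
    (h : kIsomorphic k NX NY) : dN k NX NY = 0 := by
  obtain ⟨φ, hφ⟩ := h
  set C : Set (X × Y) := { p | p.2 = φ p.1 } with hCdef
  have hC : IsCorrespondence C :=
    ⟨fun x => ⟨φ x, rfl⟩, fun y => ⟨φ.symm y, (φ.apply_symm_apply y).symm⟩⟩
  have hG : Gamma NX NY k C = 0 := by
    have hset : { v : ℝ | ∃ (tx : Fin (k + 1) → X) (ty : Fin (k + 1) → Y),
        (∀ i, (tx i, ty i) ∈ C) ∧ v = |NX.r k tx - NY.r k ty| } = {0} := by
      ext v
      constructor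
      · rintro ⟨tx, ty, hm, rfl⟩
        have hty : ty = fun i => φ (tx i) := funext fun i => hm i
        rw [hty, hφ tx]
        simp
      · rintro rfl
        obtain ⟨x⟩ := ‹Nonempty X›
        refine ⟨fun _ => x, fun _ => φ x, fun _ => rfl, ?_⟩
        rw [show (fun _ : Fin (k+1) => φ x) = fun i => φ ((fun _ : Fin (k+1) => x) i) from rfl,
          hφ]
        simp
    rw [Gamma, hset, csSup_singleton]
  have h1 : dN k NX NY ≤ 0 := by
    have := csInf_le (dNSet_bddBelow NX NY) (s := { v : ℝ | ∃ C : Set (X × Y),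
      IsCorrespondence C ∧ v = Gamma NX NY k C }) ⟨C, hC, hG.symm⟩
    simpa [dN] using this
  exact le_antisymm h1 (dN_nonneg NX NY)

lemma gamma_triangle (hk : k ≤ K) (NX : HONetwork K X) (NY : HONetwork K Y) (NZ : HONetwork K Z)
    (C1 : Set (X × Z)) (C2 : Set (Z × Y)) :
    Gamma NX NY k { p : X × Y | ∃ z, (p.1, z) ∈ C1 ∧ (z, p.2) ∈ C2 } ≤
      Gamma NX NZ k C1 + Gamma NZ NY k C2 := by
  apply Real.sSup_le
  · rintro v ⟨tx, ty, hm, rfl⟩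
    set tz : Fin (k + 1) → Z := fun i => (hm i).choose with htz
    have h1 : ∀ i, (tx i, tz i) ∈ C1 := fun i => (hm i).choose_spec.1
    have h2 : ∀ i, (tz i, ty i) ∈ C2 := fun i => (hm i).choose_spec.2
    have g1 := mem_gammaSet_le hk NX NZ C1 tx tz h1
    have g2 := mem_gammaSet_le hk NZ NY C2 tz ty h2
    calc |NX.r k tx - NY.r k ty|
        ≤ |NX.r k tx - NZ.r k tz| + |NZ.r k tz - NY.r k ty| := abs_sub_le _ _ _
      _ ≤ Gamma NX NZ k C1 + Gamma NZ NY k C2 := add_le_add g1 g2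
  · exact add_nonneg (gamma_nonneg NX NZ C1) (gamma_nonneg NZ NY C2)

lemma dN_triangle (hk : k ≤ K) (NX : HONetwork K X) (NY : HONetwork K Y) (NZ : HONetwork K Z) :
    dN k NX NY ≤ dN k NX NZ + dN k NZ NY := by
  have key : ∀ (C1 : Set (X × Z)) (C2 : Set (Z × Y)), IsCorrespondence C1 →
      IsCorrespondence C2 → dN k NX NY ≤ Gamma NX NZ k C1 + Gamma NZ NY k C2 := by
    intro C1 C2 hC1 hC2
    set C : Set (X × Y) := { p | ∃ z, (p.1, z) ∈ C1 ∧ (z, p.2) ∈ C2 } with hCdef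
    have hC : IsCorrespondence C := by
      constructor
      · intro x
        obtain ⟨z, hz⟩ := hC1.1 x
        obtain ⟨y, hy⟩ := hC2.1 z
        exact ⟨y, z, hz, hy⟩
      · intro y
        obtain ⟨z, hz⟩ := hC2.2 y
        obtain ⟨x, hx⟩ := hC1.2 z
        exact ⟨x, z, hx, hz⟩
    have h1 : dN k NX NY ≤ Gamma NX NY k C := csInf_le (dNSet_bddBelow NX NY) ⟨C, hC, rfl⟩
    exact h1.trans (gamma_triangle hk NX NY NZ C1 C2)
  have step : ∀ (C1 : Set (X × Z)), IsCorrespondence C1 →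
      dN k NX NY - Gamma NX NZ k C1 ≤ dN k NZ NY := by
    intro C1 hC1
    apply le_csInf (dNSet_nonempty NZ NY)
    rintro b ⟨C2, hC2, rfl⟩
    linarith [key C1 C2 hC1 hC2]
  have step2 : dN k NX NY - dN k NZ NY ≤ dN k NX NZ := by
    apply le_csInf (dNSet_nonempty NX NZ)
    rintro b ⟨C1, hC1, rfl⟩
    linarith [step C1 hC1]
  linarith

end Aux

/-- For every `K` and every `0 ≤ k ≤ K`, the `k`-order network distance `d_N^k`
is a pseudometric on the space of `K`-order networks modulo `k`-isomorphism. -/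
theorem dN_pseudometric (K k : ℕ) (hk : k ≤ K)
    (X Y Z : Type) [Fintype X] [Nonempty X] [Fintype Y] [Nonempty Y] [Fintype Z] [Nonempty Z]
    (NX : HONetwork K X) (NY : HONetwork K Y) (NZ : HONetwork K Z) :
    0 ≤ dN k NX NY ∧
    dN k NX NY = dN k NY NX ∧
    (kIsomorphic k NX NY → dN k NX NY = 0) ∧
    dN k NX NY ≤ dN k NX NZ + dN k NZ NY :=
  ⟨dN_nonneg NX NY, dN_symm NX NY, dN_eq_zero_of_iso hk NX NY, dN_triangle hk NX NY NZ⟩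
end

section
/- For every nonnegative integer K and every p with 1 ≤ p ≤ ∞, the p-norm network distance d_{N,p} is a pseudometric on the space of K-order networks modulo isomorphism: for all K-order networks N_X, N_Y, N_Z it satisfies (i) d_{N,p}(N_X,N_Y) ≥ 0, (ii) d_{N,p}(N_X,N_Y) = d_{N,p}(N_Y,N_X), (iii) if N_X and N_Y are isomorphic then d_{N,p}(N_X,N_Y) = 0, and (iv) d_{N,p}(N_X,N_Y) ≤ d_{N,p}(N_X,N_Z) + d_{N,p}(N_Z,N_Y). -/
open scoped ENNReal

section Aux

variable {K : ℕ} {X Y Z : Type} [Fintype X] [Nonempty X] [Fintype Y] [Nonempty Y]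
  [Fintype Z] [Nonempty Z]

/-- The set whose supremum defines `Gamma`. -/
def gammaSet (NX : HONetwork K X) (NY : HONetwork K Y) (k : ℕ) (C : Set (X × Y)) : Set ℝ :=
  { v : ℝ | ∃ (tx : Fin (k + 1) → X) (ty : Fin (k + 1) → Y),
    (∀ i, (tx i, ty i) ∈ C) ∧ v = |NX.r k tx - NY.r k ty| }

lemma Gamma_eq (NX : HONetwork K X) (NY : HONetwork K Y) (k : ℕ) (C : Set (X × Y)) :
    Gamma NX NY k C = sSup (gammaSet NX NY k C) := rfl

lemma gammaSet_finite (NX : HONetwork K X) (NY : HONetwork K Y) (k : ℕ) (C : Set (X × Y)) :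
    (gammaSet NX NY k C).Finite := by
  apply Set.Finite.subset (Set.finite_range
    (fun q : (Fin (k + 1) → X) × (Fin (k + 1) → Y) => |NX.r k q.1 - NY.r k q.2|))
  rintro v ⟨tx, ty, -, rfl⟩
  exact ⟨(tx, ty), rfl⟩

lemma gammaSet_nonempty (NX : HONetwork K X) (NY : HONetwork K Y) (k : ℕ) {C : Set (X × Y)}
    (hC : IsCorrespondence C) : (gammaSet NX NY k C).Nonempty := by
  obtain ⟨x0⟩ := (inferInstance : Nonempty X)
  obtain ⟨y0, hy0⟩ := hC.1 x0
  exact ⟨_, fun _ => x0, fun _ => y0, fun _ => hy0, rfl⟩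

lemma le_Gamma (NX : HONetwork K X) (NY : HONetwork K Y) (k : ℕ) (C : Set (X × Y))
    {v : ℝ} (hv : v ∈ gammaSet NX NY k C) : v ≤ Gamma NX NY k C :=
  le_csSup (gammaSet_finite NX NY k C).bddAbove hv

lemma Gamma_nonneg (NX : HONetwork K X) (NY : HONetwork K Y) (k : ℕ) {C : Set (X × Y)}
    (hC : IsCorrespondence C) : 0 ≤ Gamma NX NY k C := by
  obtain ⟨v, hv⟩ := gammaSet_nonempty NX NY k hC
  refine le_trans ?_ (le_Gamma NX NY k C hv)
  obtain ⟨tx, ty, -, rfl⟩ := hv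
  exact abs_nonneg _

lemma Gamma_comm (NX : HONetwork K X) (NY : HONetwork K Y) (k : ℕ) (C : Set (X × Y)) :
    Gamma NY NX k {q : Y × X | (q.2, q.1) ∈ C} = Gamma NX NY k C := by
  rw [Gamma_eq, Gamma_eq]
  congr 1
  ext v
  constructor
  · rintro ⟨ty, tx, h, rfl⟩
    exact ⟨tx, ty, h, (abs_sub_comm _ _)⟩
  · rintro ⟨tx, ty, h, rfl⟩
    exact ⟨ty, tx, h, (abs_sub_comm _ _)⟩

/-- The set whose infimum defines `dNp`. -/
def dNpSet (p : ℝ≥0∞) [Fact (1 ≤ p)] (NX : HONetwork K X) (NY : HONetwork K Y) : Set ℝ :=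
  { v : ℝ | ∃ C : Set (X × Y), IsCorrespondence C ∧
    v = pNorm K p (fun k : Fin (K + 1) => Gamma NX NY (k : ℕ) C) }

lemma dNp_eq (p : ℝ≥0∞) [Fact (1 ≤ p)] (NX : HONetwork K X) (NY : HONetwork K Y) :
    dNp p NX NY = sInf (dNpSet p NX NY) := rfl

lemma dNpSet_finite (p : ℝ≥0∞) [Fact (1 ≤ p)] (NX : HONetwork K X) (NY : HONetwork K Y) :
    (dNpSet p NX NY).Finite := by
  apply Set.Finite.subset (Set.finite_range
    (fun C : Set (X × Y) => pNorm K p (fun k : Fin (K + 1) => Gamma NX NY (k : ℕ) C)))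
  rintro v ⟨C, -, rfl⟩
  exact ⟨C, rfl⟩

lemma isCorrespondence_univ : IsCorrespondence (Set.univ : Set (X × Y)) := by
  constructor
  · intro x; obtain ⟨y⟩ := (inferInstance : Nonempty Y); exact ⟨y, trivial⟩
  · intro y; obtain ⟨x⟩ := (inferInstance : Nonempty X); exact ⟨x, trivial⟩

lemma dNpSet_nonempty (p : ℝ≥0∞) [Fact (1 ≤ p)] (NX : HONetwork K X) (NY : HONetwork K Y) :
    (dNpSet p NX NY).Nonempty :=
  ⟨_, Set.univ, isCorrespondence_univ, rfl⟩

lemma dNpSet_nonneg (p : ℝ≥0∞) [Fact (1 ≤ p)] (NX : HONetwork K X) (NY : HONetwork K Y)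
    {v : ℝ} (hv : v ∈ dNpSet p NX NY) : 0 ≤ v := by
  obtain ⟨C, -, rfl⟩ := hv
  exact norm_nonneg _

lemma dNp_nonneg (p : ℝ≥0∞) [Fact (1 ≤ p)] (NX : HONetwork K X) (NY : HONetwork K Y) :
    0 ≤ dNp p NX NY :=
  le_csInf (dNpSet_nonempty p NX NY) (fun _ hv => dNpSet_nonneg p NX NY hv)

lemma pNorm_mono (p : ℝ≥0∞) [Fact (1 ≤ p)] (u w : Fin (K + 1) → ℝ)
    (h : ∀ i, |u i| ≤ |w i|) : pNorm K p u ≤ pNorm K p w := by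
  have hp1 : (1 : ℝ≥0∞) ≤ p := Fact.out
  unfold pNorm
  rcases eq_or_ne p ∞ with rfl | hp
  · rw [PiLp.norm_eq_ciSup, PiLp.norm_eq_ciSup]
    refine ciSup_mono (Set.Finite.bddAbove (Set.finite_range _)) (fun i => ?_)
    simpa [WithLp.equiv_symm_apply, PiLp.toLp_apply, Real.norm_eq_abs] using h i
  · have hp0 : 0 < p.toReal := ENNReal.toReal_pos (lt_of_lt_of_le one_pos hp1).ne' hp
    rw [PiLp.norm_eq_sum hp0, PiLp.norm_eq_sum hp0]
    apply Real.rpow_le_rpow (by positivity) ?_ (by positivity)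
    apply Finset.sum_le_sum
    intro i _
    simp only [WithLp.equiv_symm_apply, PiLp.toLp_apply, Real.norm_eq_abs]
    exact Real.rpow_le_rpow (abs_nonneg _) (h i) hp0.le

lemma pNorm_add_le (p : ℝ≥0∞) [Fact (1 ≤ p)] (u w : Fin (K + 1) → ℝ) :
    pNorm K p (u + w) ≤ pNorm K p u + pNorm K p w := by
  unfold pNorm
  have : (WithLp.equiv p (Fin (K + 1) → ℝ)).symm (u + w)
      = (WithLp.equiv p (Fin (K + 1) → ℝ)).symm u + (WithLp.equiv p (Fin (K + 1) → ℝ)).symm w :=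
    rfl
  rw [this]
  exact norm_add_le _ _

lemma pNorm_zero (p : ℝ≥0∞) [Fact (1 ≤ p)] : pNorm K p (fun _ : Fin (K + 1) => (0 : ℝ)) = 0 := by
  unfold pNorm
  have : (WithLp.equiv p (Fin (K + 1) → ℝ)).symm (fun _ => (0 : ℝ))
      = (0 : PiLp p (fun _ : Fin (K + 1) => ℝ)) := rfl
  rw [this, norm_zero]

/-- Composition of correspondences. -/
def compCorr (C1 : Set (X × Z)) (C2 : Set (Z × Y)) : Set (X × Y) :=
  { q | ∃ z : Z, (q.1, z) ∈ C1 ∧ (z, q.2) ∈ C2 }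

lemma isCorrespondence_comp {C1 : Set (X × Z)} {C2 : Set (Z × Y)}
    (h1 : IsCorrespondence C1) (h2 : IsCorrespondence C2) :
    IsCorrespondence (compCorr C1 C2) := by
  constructor
  · intro x
    obtain ⟨z, hz⟩ := h1.1 x
    obtain ⟨y, hy⟩ := h2.1 z
    exact ⟨y, z, hz, hy⟩
  · intro y
    obtain ⟨z, hz⟩ := h2.2 y
    obtain ⟨x, hx⟩ := h1.2 z
    exact ⟨x, z, hx, hz⟩

lemma Gamma_comp_le (NX : HONetwork K X) (NY : HONetwork K Y) (NZ : HONetwork K Z) (k : ℕ)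
    {C1 : Set (X × Z)} {C2 : Set (Z × Y)}
    (h1 : IsCorrespondence C1) (h2 : IsCorrespondence C2) :
    Gamma NX NY k (compCorr C1 C2) ≤ Gamma NX NZ k C1 + Gamma NZ NY k C2 := by
  rw [Gamma_eq]
  apply csSup_le (gammaSet_nonempty NX NY k (isCorrespondence_comp h1 h2))
  rintro v ⟨tx, ty, hmem, rfl⟩
  choose tz hz1 hz2 using hmem
  calc |NX.r k tx - NY.r k ty|
      ≤ |NX.r k tx - NZ.r k tz| + |NZ.r k tz - NY.r k ty| := abs_sub_le _ _ _
    _ ≤ Gamma NX NZ k C1 + Gamma NZ NY k C2 :=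
        add_le_add (le_Gamma NX NZ k C1 ⟨tx, tz, hz1, rfl⟩)
          (le_Gamma NZ NY k C2 ⟨tz, ty, hz2, rfl⟩)

end Aux

/-- For every `K` and every `1 ≤ p ≤ ∞`, the `p`-norm network distance `d_{N,p}`
is a pseudometric on the space of `K`-order networks modulo isomorphism. -/
theorem dNp_pseudometric (K : ℕ) (p : ℝ≥0∞) [Fact (1 ≤ p)]
    (X Y Z : Type) [Fintype X] [Nonempty X] [Fintype Y] [Nonempty Y] [Fintype Z] [Nonempty Z]
    (NX : HONetwork K X) (NY : HONetwork K Y) (NZ : HONetwork K Z) :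
    0 ≤ dNp p NX NY ∧
    dNp p NX NY = dNp p NY NX ∧
    (Isomorphic NX NY → dNp p NX NY = 0) ∧
    dNp p NX NY ≤ dNp p NX NZ + dNp p NZ NY := by
  refine ⟨dNp_nonneg p NX NY, ?_, ?_, ?_⟩
  · -- symmetry
    rw [dNp_eq, dNp_eq]
    congr 1
    ext v
    constructor
    · rintro ⟨C, hC, rfl⟩
      refine ⟨{q : Y × X | (q.2, q.1) ∈ C}, ⟨fun y => hC.2 y, fun x => hC.1 x⟩, ?_⟩
      congr 1
      funext k
      exact (Gamma_comm NX NY (k : ℕ) C).symm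
    · rintro ⟨C, hC, rfl⟩
      refine ⟨{q : X × Y | (q.2, q.1) ∈ C}, ⟨fun x => hC.2 x, fun y => hC.1 y⟩, ?_⟩
      congr 1
      funext k
      exact (Gamma_comm NY NX (k : ℕ) C).symm
  · -- isomorphic implies zero
    rintro ⟨φ, hφ⟩
    set C : Set (X × Y) := {q | q.2 = φ q.1} with hCdef
    have hC : IsCorrespondence C := ⟨fun x => ⟨φ x, rfl⟩, fun y => ⟨φ.symm y, (φ.apply_symm_apply y).symm⟩⟩
    have hG : ∀ k : Fin (K + 1), Gamma NX NY (k : ℕ) C = 0 := by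
      intro k
      rw [Gamma_eq]
      have hset : gammaSet NX NY (k : ℕ) C = {0} := by
        ext v
        constructor
        · rintro ⟨tx, ty, hmem, rfl⟩
          have hty : ty = fun i => φ (tx i) := funext fun i => hmem i
          rw [hty, hφ (k : ℕ) k.is_le tx, sub_self, abs_zero]
          rfl
        · rintro rfl
          obtain ⟨x0⟩ := (inferInstance : Nonempty X)
          refine ⟨fun _ => x0, fun _ => φ x0, fun _ => rfl, ?_⟩
          rw [hφ (k : ℕ) k.is_le, sub_self, abs_zero]
      rw [hset, csSup_singleton]
    have hv : pNorm K p (fun k : Fin (K + 1) => Gamma NX NY (k : ℕ) C) = 0 := by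
      have : (fun k : Fin (K + 1) => Gamma NX NY (k : ℕ) C)
          = fun _ : Fin (K + 1) => (0 : ℝ) := funext hG
      rw [this, pNorm_zero]
    have hle : dNp p NX NY ≤ 0 := by
      rw [← hv, dNp_eq]
      exact csInf_le (dNpSet_finite p NX NY).bddBelow ⟨C, hC, rfl⟩
    exact le_antisymm hle (dNp_nonneg p NX NY)
  · -- triangle inequality
    have h1 : dNp p NX NZ ∈ dNpSet p NX NZ := by
      rw [dNp_eq]
      exact (dNpSet_nonempty p NX NZ).csInf_mem (dNpSet_finite p NX NZ)
    have h2 : dNp p NZ NY ∈ dNpSet p NZ NY := by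
      rw [dNp_eq]
      exact (dNpSet_nonempty p NZ NY).csInf_mem (dNpSet_finite p NZ NY)
    obtain ⟨C1, hC1, hv1⟩ := h1
    obtain ⟨C2, hC2, hv2⟩ := h2
    set C : Set (X × Y) := compCorr C1 C2 with hCdef
    have hC : IsCorrespondence C := isCorrespondence_comp hC1 hC2
    have step1 : dNp p NX NY ≤ pNorm K p (fun k : Fin (K + 1) => Gamma NX NY (k : ℕ) C) := by
      rw [dNp_eq]
      exact csInf_le (dNpSet_finite p NX NY).bddBelow ⟨C, hC, rfl⟩
    have step2 : pNorm K p (fun k : Fin (K + 1) => Gamma NX NY (k : ℕ) C)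
        ≤ pNorm K p ((fun k : Fin (K + 1) => Gamma NX NZ (k : ℕ) C1)
            + fun k : Fin (K + 1) => Gamma NZ NY (k : ℕ) C2) := by
      apply pNorm_mono
      intro i
      rw [abs_of_nonneg (Gamma_nonneg NX NY (i : ℕ) hC)]
      refine le_trans (Gamma_comp_le NX NY NZ (i : ℕ) hC1 hC2) (le_abs_self _)
    have step3 : pNorm K p ((fun k : Fin (K + 1) => Gamma NX NZ (k : ℕ) C1)
            + fun k : Fin (K + 1) => Gamma NZ NY (k : ℕ) C2)
        ≤ pNorm K p (fun k : Fin (K + 1) => Gamma NX NZ (k : ℕ) C1)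
          + pNorm K p (fun k : Fin (K + 1) => Gamma NZ NY (k : ℕ) C2) :=
      pNorm_add_le p _ _
    rw [hv1, hv2]
    exact le_trans step1 (le_trans step2 step3)
end

section
/- Let D_X and D_Y be K-order dissimilarity networks with K ≥ 1, let 1 ≤ k ≤ K, and let C be a correspondence between X and Y such that r_X^k(x_0,…,x_k) = r_Y^k(y_0,…,y_k) for all pairs (x_0,y_0),…,(x_k,y_k) ∈ C. Then any two nodes of X matched by C to a common node of Y must be equal: if (x,y) ∈ C and (x',y) ∈ C then x = x'. Consequently any function φ : X → Y with (x, φ(x)) ∈ C for all x ∈ X is injective. -/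
open scoped ENNReal

lemma tupleRank_const {X : Type} {n : ℕ} (a : X) :
    tupleRank (fun _ : Fin (n + 1) => a) = 1 := by
  simp [tupleRank, Set.range_const]

lemma tupleRank_pair {X : Type} {k : ℕ} (hk1 : 1 ≤ k) (a b : X) (hab : a ≠ b) :
    tupleRank (fun i : Fin (k + 1) => if i = 0 then a else b) = 2 := by
  have hrange : Set.range (fun i : Fin (k + 1) => if i = 0 then a else b) = {a, b} := by
    ext z
    constructor
    · rintro ⟨i, rfl⟩
      by_cases h : i = 0 <;> simp [h]
    · rintro (rfl | rfl)
      · exact ⟨0, by simp⟩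
      · refine ⟨⟨1, by omega⟩, ?_⟩
        have : (⟨1, by omega⟩ : Fin (k + 1)) ≠ 0 := by
          simp [Fin.ext_iff]
        simp [this]
  rw [tupleRank, hrange, Set.ncard_pair hab]

lemma dfun_zero_le {K : ℕ} {X : Type} [Fintype X] [Nonempty X]
    (DX : DissimNetwork K X) :
    ∀ k, k ≤ K → ∀ t : Fin (k + 1) → X, DX.dfun 0 (fun _ => t 0) ≤ DX.dfun k t := by
  intro k
  induction k with
  | zero =>
    intro _ t
    have : (fun _ : Fin 1 => t 0) = t := by
      funext i
      rw [Subsingleton.elim i 0]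
    rw [this]
  | succ k ih =>
    intro hk t
    have h1 : DX.dfun k (fun i : Fin (k + 1) => t i.castSucc) ≤ DX.dfun (k + 1) t :=
      DX.order_incr k hk t
    have h2 := ih (by omega) (fun i : Fin (k + 1) => t i.castSucc)
    simpa using h2.trans h1

lemma dfun_const {K : ℕ} {X : Type} [Fintype X] [Nonempty X]
    (DX : DissimNetwork K X) (k : ℕ) (hk : k ≤ K) (a : X) :
    DX.dfun k (fun _ : Fin (k + 1) => a) = DX.dfun 0 (fun _ : Fin 1 => a) := by
  have hmono : StrictMono (fun _ : Fin 1 => (0 : Fin (k + 1))) := by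
    intro i j hij
    exact absurd (Subsingleton.elim i j ▸ hij) (lt_irrefl j)
  have hid := DX.identity k hk 0 (by omega) (fun _ : Fin (k + 1) => a)
    (fun _ : Fin 1 => (0 : Fin (k + 1))) hmono (by ext z; simp [Function.comp, eq_comm])
  have hd1 := DX.decomp k hk (fun _ : Fin (k + 1) => a)
  have hd2 := DX.decomp 0 (by omega) (fun _ : Fin 1 => a)
  have hcomp : ((fun _ : Fin (k + 1) => a) ∘ (fun _ : Fin 1 => (0 : Fin (k + 1))))
      = (fun _ : Fin 1 => a) := rfl
  rw [hcomp] at hid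
  rw [hd1, hd2, tupleRank_const, tupleRank_const] at hid
  linarith


/-- for dissimilarity networks, if a correspondence `C` matches all `k`-order
relationship values exactly, then two nodes of `X` matched by `C` to a common node of `Y`
are equal; consequently any selection function `φ` with `(x, φ x) ∈ C` is injective. -/
theorem dissim_correspondence_injective (K k : ℕ) (hK : 1 ≤ K) (hk1 : 1 ≤ k) (hk : k ≤ K)
    (X Y : Type) [Fintype X] [Nonempty X] [Fintype Y] [Nonempty Y]
    (DX : DissimNetwork K X) (DY : DissimNetwork K Y)
    (C : Set (X × Y)) (hC : IsCorrespondence C)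
    (hmatch : ∀ (tx : Fin (k + 1) → X) (ty : Fin (k + 1) → Y),
      (∀ i, (tx i, ty i) ∈ C) → DX.r k tx = DY.r k ty) :
    (∀ (x x' : X) (y : Y), (x, y) ∈ C → (x', y) ∈ C → x = x') ∧
    ∀ φ : X → Y, (∀ x : X, (x, φ x) ∈ C) → Function.Injective φ := by
  have key : ∀ (a b : X) (y : Y), a ≠ b → (a, y) ∈ C → (b, y) ∈ C →
      DX.eps + DX.dfun 0 (fun _ : Fin 1 => a) ≤ DX.dfun 0 (fun _ : Fin 1 => b) := by
    intro a b y hab ha hb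
    set tx1 : Fin (k + 1) → X := fun i => if i = 0 then a else b with htx1
    have hm1 : DX.r k tx1 = DY.r k (fun _ => y) := by
      apply hmatch
      intro i
      by_cases h : i = 0 <;> simp [htx1, h, ha, hb]
    have hm2 : DX.r k (fun _ => b) = DY.r k (fun _ => y) := by
      apply hmatch
      intro i
      simpa using hb
    have heq : DX.r k tx1 = DX.r k (fun _ => b) := hm1.trans hm2.symm
    have hd1 := DX.decomp k hk tx1
    have hd2 := DX.decomp k hk (fun _ : Fin (k + 1) => b)
    have hr1 : tupleRank tx1 = 2 := tupleRank_pair hk1 a b hab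
    have hr2 : tupleRank (fun _ : Fin (k + 1) => b) = 1 := tupleRank_const b
    rw [hd1, hd2, hr1, hr2] at heq
    have hle : DX.dfun 0 (fun _ : Fin 1 => a) ≤ DX.dfun k tx1 := by
      have := dfun_zero_le DX k hk tx1
      simpa [htx1] using this
    have hcb := dfun_const DX k hk b
    push_cast at heq
    linarith
  have main : ∀ (x x' : X) (y : Y), (x, y) ∈ C → (x', y) ∈ C → x = x' := by
    intro x x' y hx hx'
    by_contra hne
    have h1 := key x x' y hne hx hx'
    have h2 := key x' x y (Ne.symm hne) hx' hx
    have := DX.eps_pos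
    linarith
  refine ⟨main, fun φ hφ x x' hxx => main x x' (φ x) (hφ x) (hxx ▸ hφ x')⟩
end

section
/- There exist 1-order networks N_X and N_Y that are not 1-isomorphic (in particular, their node sets have different cardinalities) but whose 1-order network distance is zero: d_N^1(N_X,N_Y) = 0. Concretely, one may take X = {x_1,x_2,x_3} with r_X^0 ≡ 1 and r_X^1(x_i,x_j) = 1 for all i,j, and Y = {y_1,y_2} with r_Y^0 ≡ 1 and r_Y^1(y_i,y_j) = 1 for all i,j; then the correspondence C = {(x_1,y_1),(x_2,y_2),(x_3,y_2)} witnesses Γ^1_{X,Y}(C) = 0. -/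
open scoped ENNReal

/-- The constant-1 network. -/
def oneNet (K : ℕ) (X : Type) [Fintype X] [Nonempty X] : HONetwork K X where
  r := fun _ _ => 1
  r_nonneg := fun _ _ _ => zero_le_one
  r_le_one := fun _ _ _ => le_rfl
  symm := fun _ _ _ _ => rfl
  identity := fun _ _ _ _ _ _ _ _ => rfl

lemma gamma_oneNet {X Y : Type} [Fintype X] [Nonempty X] [Fintype Y] [Nonempty Y]
    (C : Set (X × Y)) (hC : ∃ p : X × Y, p ∈ C) (k : ℕ) :
    Gamma (oneNet 1 X) (oneNet 1 Y) k C = 0 := by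
  obtain ⟨⟨x, y⟩, hxy⟩ := hC
  have hset : { v : ℝ | ∃ (tx : Fin (k + 1) → X) (ty : Fin (k + 1) → Y),
      (∀ i, (tx i, ty i) ∈ C) ∧ v = |(oneNet 1 X).r k tx - (oneNet 1 Y).r k ty| } = {0} := by
    ext v
    simp only [Set.mem_setOf_eq, Set.mem_singleton_iff]
    constructor
    · rintro ⟨tx, ty, -, rfl⟩
      simp [oneNet]
    · rintro rfl
      exact ⟨fun _ => x, fun _ => y, fun _ => hxy, by simp [oneNet]⟩
  rw [Gamma, hset, csSup_singleton]

/-- there exist `1`-order networks, with all relationship values equal to `1`,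
on node sets of cardinalities `3` and `2`, which are not `1`-isomorphic yet have zero
`1`-order network distance; the correspondence `{(x₁,y₁),(x₂,y₂),(x₃,y₂)}` witnesses
`Γ^1_{X,Y}(C) = 0`. -/
theorem exists_not_isomorphic_with_zero_dN :
    ∃ (NX : HONetwork 1 (Fin 3)) (NY : HONetwork 1 (Fin 2)),
      (∀ k, k ≤ 1 → ∀ t : Fin (k + 1) → Fin 3, NX.r k t = 1) ∧
      (∀ k, k ≤ 1 → ∀ t : Fin (k + 1) → Fin 2, NY.r k t = 1) ∧
      ¬ kIsomorphic 1 NX NY ∧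
      Gamma NX NY 1 { q : Fin 3 × Fin 2 |
        (q.1 = 0 ∧ q.2 = 0) ∨ (q.1 = 1 ∧ q.2 = 1) ∨ (q.1 = 2 ∧ q.2 = 1) } = 0 ∧
      dN 1 NX NY = 0 := by
  refine ⟨oneNet 1 (Fin 3), oneNet 1 (Fin 2), fun _ _ _ => rfl, fun _ _ _ => rfl, ?_, ?_, ?_⟩
  · rintro ⟨φ, -⟩
    have := Fintype.card_congr φ
    simp at this
  · exact gamma_oneNet _ ⟨(0, 0), Or.inl ⟨rfl, rfl⟩⟩ 1
  · have h0 : (0 : ℝ) ∈ { v : ℝ | ∃ C : Set (Fin 3 × Fin 2), IsCorrespondence C ∧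
        v = Gamma (oneNet 1 (Fin 3)) (oneNet 1 (Fin 2)) 1 C } := by
      refine ⟨Set.univ, ⟨fun x => ⟨0, Set.mem_univ _⟩, fun y => ⟨0, Set.mem_univ _⟩⟩, ?_⟩
      exact (gamma_oneNet _ ⟨(0, 0), Set.mem_univ _⟩ 1).symm
    have hlb : ∀ v ∈ { v : ℝ | ∃ C : Set (Fin 3 × Fin 2), IsCorrespondence C ∧
        v = Gamma (oneNet 1 (Fin 3)) (oneNet 1 (Fin 2)) 1 C }, (0:ℝ) ≤ v := by
      rintro v ⟨C, hC, rfl⟩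
      obtain ⟨y, hy⟩ := hC.1 0
      rw [gamma_oneNet _ ⟨(0, y), hy⟩ 1]
    exact le_antisymm (csInf_le ⟨0, hlb⟩ h0) (le_csInf ⟨0, h0⟩ hlb)
end
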